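/- In the real Hilbert space ℓ² of square-summable sequences with standard basis vectors (eₙ), let P = {e₁} ∪ {((n+1)/n)·eₙ : n = 2, 3, 4, …} and A = {((n+2)/n)·eₙ : n = 2, 3, 4, …}. Then P ∩ A = ∅, d(0, P) = d(0, A) = 1 (so 0 lies on the bisector of P and A), and the open ball B(0, 0.1) is contained in dom(P, A) = {x ∈ ℓ² : d(x, P) ≤ d(x, A)}; in particular 0 lies in the interior of dom(P, A), so ∂(dom(P, A)) ≠ {x : d(x, P) = d(x, A)}. This shows the hypothesis d(P, A) > 0 in the main theorem cannot be weakened to P ∩ A = ∅. -/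

import Mathlib

open Metric

private lemma aux_le_infDist {X : Type*} [MetricSpace X] {s : Set X} {x : X} {b : ℝ}
    (hs : s.Nonempty) (hb : ∀ y ∈ s, b ≤ dist x y) : b ≤ Metric.infDist x s := by
  by_contra h
  push_neg at h
  obtain ⟨y, hy, hlt⟩ := (Metric.infDist_lt_iff hs).1 h
  exact absurd (hb y hy) (not_le.2 hlt)

private lemma aux_ineq (N t X : ℝ) (hN : 2 ≤ N) (hX1 : X < 0.1) (ht : |t| ≤ X) :
    X ^ 2 - 2 * ((N + 1) / N) * t + ((N + 1) / N) ^ 2 ≤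
      X ^ 2 - 2 * ((N + 2) / N) * t + ((N + 2) / N) ^ 2 := by
  have hN0 : (0 : ℝ) < N := by linarith
  have hN0' : N ≠ 0 := ne_of_gt hN0
  have key : 2 * ((N + 2) / N) * t - 2 * ((N + 1) / N) * t ≤
      ((N + 2) / N) ^ 2 - ((N + 1) / N) ^ 2 := by
    have l1 : 2 * ((N + 2) / N) * t - 2 * ((N + 1) / N) * t = 2 * t / N := by
      field_simp; ring
    have l2 : ((N + 2) / N) ^ 2 - ((N + 1) / N) ^ 2 = (2 * N + 3) / N ^ 2 := by
      field_simp; ring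
    rw [l1, l2, div_le_div_iff₀ hN0 (by positivity)]
    have ht' : t ≤ X := (abs_le.mp ht).2
    have h01 : t < 0.1 := lt_of_le_of_lt ht' hX1
    nlinarith [mul_pos hN0 hN0, mul_lt_mul_of_pos_right h01 (mul_pos hN0 hN0), sq_nonneg N]
  linarith

/-- Counterexample in `ℓ²` showing `d(P,A) > 0` cannot be weakened to `P ∩ A = ∅`:
with `P = {e₁} ∪ {((n+1)/n)eₙ : n ≥ 2}` and `A = {((n+2)/n)eₙ : n ≥ 2}` one has
`P ∩ A = ∅`, `d(0,P) = d(0,A) = 1`, yet the ball `B(0, 0.1)` is contained in `dom(P,A)`,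
so `0` is interior to `dom(P,A)` and the boundary of `dom(P,A)` is not the bisector. -/
theorem counterexample_ell2_disjoint_sites
    (e : ℕ → lp (fun _ : ℕ => ℝ) 2)
    (he : ∀ n : ℕ, e n = lp.single 2 n (1 : ℝ))
    (P A : Set (lp (fun _ : ℕ => ℝ) 2))
    (hP : P = {e 1} ∪ {x | ∃ n : ℕ, 2 ≤ n ∧ x = (((n : ℝ) + 1) / n) • e n})
    (hA : A = {x | ∃ n : ℕ, 2 ≤ n ∧ x = (((n : ℝ) + 2) / n) • e n}) :
    P ∩ A = ∅ ∧
    Metric.infDist (0 : lp (fun _ : ℕ => ℝ) 2) P = 1 ∧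
    Metric.infDist (0 : lp (fun _ : ℕ => ℝ) 2) A = 1 ∧
    Metric.ball (0 : lp (fun _ : ℕ => ℝ) 2) 0.1
      ⊆ {x | Metric.infDist x P ≤ Metric.infDist x A} ∧
    (0 : lp (fun _ : ℕ => ℝ) 2) ∈ interior {x | Metric.infDist x P ≤ Metric.infDist x A} ∧
    frontier {x : lp (fun _ : ℕ => ℝ) 2 | Metric.infDist x P ≤ Metric.infDist x A}
      ≠ {x | Metric.infDist x P = Metric.infDist x A} := by
  have hcoord : ∀ n j : ℕ, (e n : ∀ _ : ℕ, ℝ) j = if j = n then 1 else 0 := by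
    intro n j
    rw [he]
    by_cases h : j = n
    · subst h; simp [lp.single_apply_self]
    · simp [lp.single_apply_ne _ _ _ h, h]
  have hinner : ∀ (n : ℕ) (x : lp (fun _ : ℕ => ℝ) 2),
      (inner ℝ (e n) x : ℝ) = (x : ∀ _ : ℕ, ℝ) n := by
    intro n x
    rw [he, lp.inner_single_left]
    simp [RCLike.inner_apply]
  have hnorm : ∀ n : ℕ, ‖e n‖ = 1 := by
    intro n
    have h1 : (inner ℝ (e n) (e n) : ℝ) = 1 := by
      rw [hinner n (e n), hcoord n n]; simp
    have h2 : ‖e n‖ ^ 2 = 1 := by rw [← real_inner_self_eq_norm_sq]; exact h1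
    nlinarith [norm_nonneg (e n)]
  have hnormsmul : ∀ (c : ℝ) (n : ℕ), 0 ≤ c → ‖c • e n‖ = c := by
    intro c n hc
    rw [norm_smul, hnorm, Real.norm_eq_abs, abs_of_nonneg hc, mul_one]
  have hsmulcoord : ∀ (c : ℝ) (n j : ℕ),
      ((c • e n : lp (fun _ : ℕ => ℝ) 2) : ∀ _ : ℕ, ℝ) j = c * ((e n : ∀ _ : ℕ, ℝ) j) := by
    intro c n j
    simp [lp.coeFn_smul]
  have hAne : A.Nonempty := by
    rw [hA]; exact ⟨_, 2, le_refl 2, rfl⟩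
  have hPmem : e 1 ∈ P := by rw [hP]; exact Or.inl rfl
  have hdist_sq : ∀ (x : lp (fun _ : ℕ => ℝ) 2) (c : ℝ) (n : ℕ),
      dist x (c • e n) ^ 2 = ‖x‖ ^ 2 - 2 * c * ((x : ∀ _ : ℕ, ℝ) n) + c ^ 2 := by
    intro x c n
    rw [dist_eq_norm, norm_sub_sq_real]
    have h1 : (inner ℝ x (c • e n) : ℝ) = c * ((x : ∀ _ : ℕ, ℝ) n) := by
      rw [real_inner_smul_right, real_inner_comm, hinner]
    rw [h1, norm_smul, hnorm, mul_one, Real.norm_eq_abs, sq_abs]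
    ring
  -- coordinate bound
  have hcoordbd : ∀ (n : ℕ) (x : lp (fun _ : ℕ => ℝ) 2), |(x : ∀ _ : ℕ, ℝ) n| ≤ ‖x‖ := by
    intro n x
    have h := abs_real_inner_le_norm (e n) x
    rwa [hinner, hnorm, one_mul] at h
  -- Part 1 : disjointness
  have part1 : P ∩ A = ∅ := by
    ext v
    simp only [Set.mem_inter_iff, Set.mem_empty_iff_false, iff_false]
    rintro ⟨hvP, hvA⟩
    rw [hA] at hvA
    obtain ⟨m, hm, rfl⟩ := hvA
    have hm2 : (2 : ℝ) ≤ (m : ℝ) := by exact_mod_cast hm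
    have hcm : 0 < ((m : ℝ) + 2) / m := div_pos (by linarith) (by linarith)
    rw [hP] at hvP
    simp only [Set.mem_union, Set.mem_singleton_iff, Set.mem_setOf_eq] at hvP
    rcases hvP with h | ⟨n, hn, h⟩
    · have hc := congrArg (fun f : lp (fun _ : ℕ => ℝ) 2 => (f : ∀ _ : ℕ, ℝ) m) h
      simp only [hsmulcoord, hcoord] at hc
      have hm1 : m ≠ 1 := by omega
      simp only [hm1, if_true, if_false, mul_one] at hc
      rw [div_eq_zero_iff] at hc
      rcases hc with hc | hc <;> linarith
    · have hc := congrArg (fun f : lp (fun _ : ℕ => ℝ) 2 => (f : ∀ _ : ℕ, ℝ) m) h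
      simp only [hsmulcoord, hcoord] at hc
      by_cases hmn : m = n
      · subst hmn
        simp only [if_true, mul_one] at hc
        have hm0 : (m : ℝ) ≠ 0 := by linarith
        field_simp at hc
        linarith
      · simp only [hmn, if_true, if_false, mul_one, mul_zero] at hc
        rw [div_eq_zero_iff] at hc
        rcases hc with hc | hc <;> linarith
  -- Part 2 : infDist 0 P = 1
  have part2 : Metric.infDist (0 : lp (fun _ : ℕ => ℝ) 2) P = 1 := by
    apply le_antisymm
    · have := Metric.infDist_le_dist_of_mem (x := (0 : lp (fun _ : ℕ => ℝ) 2)) hPmem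
      rwa [dist_zero_left, hnorm] at this
    · apply aux_le_infDist ⟨e 1, hPmem⟩
      intro y hy
      rw [hP] at hy
      simp only [Set.mem_union, Set.mem_singleton_iff, Set.mem_setOf_eq] at hy
      rcases hy with rfl | ⟨n, hn, rfl⟩
      · rw [dist_zero_left, hnorm]
      · have hn2 : (2 : ℝ) ≤ (n : ℝ) := by exact_mod_cast hn
        rw [dist_zero_left, hnormsmul _ _ (by positivity)]
        rw [le_div_iff₀ (by linarith)]
        linarith
  -- Part 3 : infDist 0 A = 1
  have part3 : Metric.infDist (0 : lp (fun _ : ℕ => ℝ) 2) A = 1 := by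
    apply le_antisymm
    · apply le_of_forall_pos_le_add
      intro ε hε
      obtain ⟨n, hn⟩ := exists_nat_ge (max 2 (2 / ε))
      have hn2 : (2 : ℝ) ≤ (n : ℝ) := le_trans (le_max_left _ _) hn
      have hnε : 2 / ε ≤ (n : ℝ) := le_trans (le_max_right _ _) hn
      have hn2' : 2 ≤ n := by exact_mod_cast hn2
      have hmem : (((n : ℝ) + 2) / n) • e n ∈ A := by
        rw [hA]; exact ⟨n, hn2', rfl⟩
      have h2εn : 2 ≤ (n : ℝ) * ε := (div_le_iff₀ hε).1 hnε
      calc Metric.infDist (0 : lp (fun _ : ℕ => ℝ) 2) A ≤ dist 0 ((((n : ℝ) + 2) / n) • e n) :=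
            Metric.infDist_le_dist_of_mem hmem
        _ = ((n : ℝ) + 2) / n := by rw [dist_zero_left, hnormsmul _ _ (by positivity)]
        _ ≤ 1 + ε := by
            rw [div_le_iff₀ (by linarith)]
            nlinarith
    · apply aux_le_infDist hAne
      intro y hy
      rw [hA] at hy
      obtain ⟨n, hn, rfl⟩ := hy
      have hn2 : (2 : ℝ) ≤ (n : ℝ) := by exact_mod_cast hn
      rw [dist_zero_left, hnormsmul _ _ (by positivity), le_div_iff₀ (by linarith)]
      linarith
  -- Part 4 : ball inclusion
  have part4 : Metric.ball (0 : lp (fun _ : ℕ => ℝ) 2) 0.1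
      ⊆ {x | Metric.infDist x P ≤ Metric.infDist x A} := by
    intro x hx
    rw [Metric.mem_ball, dist_zero_right] at hx
    apply aux_le_infDist hAne
    intro a ha
    rw [hA] at ha
    obtain ⟨n, hn, rfl⟩ := ha
    have hn2 : (2 : ℝ) ≤ (n : ℝ) := by exact_mod_cast hn
    have hmemP : (((n : ℝ) + 1) / n) • e n ∈ P := by
      rw [hP]; exact Or.inr ⟨n, hn, rfl⟩
    refine le_trans (Metric.infDist_le_dist_of_mem hmemP) ?_
    have hsq : dist x ((((n : ℝ) + 1) / n) • e n) ^ 2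
        ≤ dist x ((((n : ℝ) + 2) / n) • e n) ^ 2 := by
      rw [hdist_sq, hdist_sq]
      exact aux_ineq (n : ℝ) _ ‖x‖ hn2 hx (hcoordbd n x)
    exact le_of_pow_le_pow_left₀ two_ne_zero dist_nonneg hsq
  -- Part 5 : interior
  have part5 : (0 : lp (fun _ : ℕ => ℝ) 2) ∈
      interior {x | Metric.infDist x P ≤ Metric.infDist x A} :=
    interior_maximal part4 Metric.isOpen_ball (Metric.mem_ball_self (by norm_num))
  refine ⟨part1, part2, part3, part4, part5, ?_⟩
  intro heq
  have h0 : (0 : lp (fun _ : ℕ => ℝ) 2) ∈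
      frontier {x | Metric.infDist x P ≤ Metric.infDist x A} := by
    rw [heq]
    show Metric.infDist (0 : lp (fun _ : ℕ => ℝ) 2) P = _
    rw [part2, part3]
  exact h0.2 part5
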